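/- Let Λ, α be positive integers with α ≤ Λ. For each j ∈ [1, Λ] define c(j) = C(Λ-α,j)/(C(Λ,j)·(C(j+α,j)-1)) + (C(Λ,α)-C(Λ-j,α))/(α·C(Λ,α)) and d(j) = C(Λ,α+j)/(C(Λ,α)·C(Λ,j)) + (C(Λ,α)-C(Λ-j,α))/(α·C(Λ,α)), with the convention that binomial coefficients vanish when the lower index exceeds the upper index or is negative. Then for every j ∈ [1, Λ], c(j) ≤ 2·d(j). -/

import Mathlib

theorem stmt_13 (Λ α : ℕ) (hΛ : 0 < Λ) (hα : 0 < α) (hαΛ : α ≤ Λ) :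
    ∀ j ∈ Finset.Icc 1 Λ,
      (Nat.choose (Λ - α) j : ℚ) /
          (Nat.choose Λ j * ((Nat.choose (j + α) j : ℚ) - 1)) +
        ((Nat.choose Λ α : ℚ) - Nat.choose (Λ - j) α) / (α * Nat.choose Λ α) ≤
      2 * ((Nat.choose Λ (α + j) : ℚ) / (Nat.choose Λ α * Nat.choose Λ j) +
        ((Nat.choose Λ α : ℚ) - Nat.choose (Λ - j) α) / (α * Nat.choose Λ α)) := by
  intro j hj
  obtain ⟨hj1, hjΛ⟩ := Finset.mem_Icc.mp hj
  -- notation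
  have hCΛj : 0 < (Nat.choose Λ j : ℚ) := by
    exact_mod_cast Nat.choose_pos hjΛ
  have hCΛα : 0 < (Nat.choose Λ α : ℚ) := by
    exact_mod_cast Nat.choose_pos hαΛ
  have hN2 : 2 ≤ Nat.choose (j + α) j := by
    calc 2 ≤ j + 1 := by omega
    _ = Nat.choose (j + 1) j := (Nat.choose_succ_self_right j).symm
    _ ≤ Nat.choose (j + α) j := Nat.choose_le_choose j (by omega)
  have hNQ : 2 ≤ (Nat.choose (j + α) j : ℚ) := by exact_mod_cast hN2
  have hN1 : 0 < (Nat.choose (j + α) j : ℚ) - 1 := by linarith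
  -- second summand nonnegative
  have hS : 0 ≤ ((Nat.choose Λ α : ℚ) - Nat.choose (Λ - j) α) / (α * Nat.choose Λ α) := by
    apply div_nonneg
    · have : Nat.choose (Λ - j) α ≤ Nat.choose Λ α :=
        Nat.choose_le_choose α (Nat.sub_le Λ j)
      have : (Nat.choose (Λ - j) α : ℚ) ≤ Nat.choose Λ α := by exact_mod_cast this
      linarith
    · positivity
  -- reduce to first summands
  have key : (Nat.choose (Λ - α) j : ℚ) /
      (Nat.choose Λ j * ((Nat.choose (j + α) j : ℚ) - 1)) ≤
      2 * ((Nat.choose Λ (α + j) : ℚ) / (Nat.choose Λ α * Nat.choose Λ j)) := by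
    by_cases hcase : α + j ≤ Λ
    · -- identity: Λ.choose (α+j) * (α+j).choose j = Λ.choose α * (Λ-α).choose j
      have hid : Nat.choose Λ (α + j) * Nat.choose (α + j) j
          = Nat.choose Λ α * Nat.choose (Λ - α) j := by
        have := Nat.choose_mul (n := Λ) (k := α + j) (s := α) (Nat.le_add_right α j)
        have hsymm : Nat.choose (α + j) α = Nat.choose (α + j) j := by
          have h := Nat.choose_symm (n := α + j) (k := j) (by omega)
          simpa [Nat.add_sub_cancel] using h
        have hsub : α + j - α = j := by omega
        rw [hsymm, hsub] at this
        exact this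
      have hidQ : (Nat.choose Λ (α + j) : ℚ) * Nat.choose (j + α) j
          = Nat.choose Λ α * Nat.choose (Λ - α) j := by
        rw [show j + α = α + j from by omega]
        exact_mod_cast hid
      rw [div_le_iff₀ (by positivity), mul_comm (2:ℚ), mul_assoc, div_mul_eq_mul_div,
        le_div_iff₀ (by positivity)]
      have hx : (0:ℚ) ≤ Nat.choose Λ (α + j) := Nat.cast_nonneg _
      have h4 : (Nat.choose Λ (α + j) : ℚ) * Nat.choose (j + α) j * Nat.choose Λ j
          = (Nat.choose Λ α : ℚ) * Nat.choose (Λ - α) j * Nat.choose Λ j := by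
        rw [hidQ]
      nlinarith [h4, mul_nonneg (mul_nonneg hx hCΛj.le)
        (by linarith : (0:ℚ) ≤ (Nat.choose (j + α) j : ℚ) - 2)]
    · -- C(Λ-α, j) = 0
      have h0 : Nat.choose (Λ - α) j = 0 := Nat.choose_eq_zero_of_lt (by omega)
      rw [h0]
      push_cast
      rw [zero_div]
      positivity
  linarith
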